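/- Let n and N be integers with n < N - 1, and let δ : ℤ → ℤ be a function satisfying δ(n) = 0 and the midpoint inequality δ(m-1) + δ(m+1) ≥ 2·δ(m) for every integer m with n < m < N - 1. If m is an integer with n < m < N - 1 such that δ(m) > 0 and δ(m+1) = δ(m) + 1, then δ(m - i) = δ(m) - i for every integer i with 0 ≤ i ≤ δ(m); in particular δ(m) ≤ m - n, so all the arguments m - i lie in [n, N-1]. -/

import Mathlib

/-- Corollary 3.3(2), second assertion: if `δ n = 0`, the midpoint inequality
holds, `δ m > 0` and `δ (m+1) = δ m + 1` for some `n < m < N - 1`, then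
`δ (m - i) = δ m - i` for all `0 ≤ i ≤ δ m`; in particular `δ m ≤ m - n`. -/
theorem defect_decrease_all (n N : ℤ) (hnN : n < N - 1) (δ : ℤ → ℤ)
    (hn : δ n = 0)
    (hmid : ∀ m : ℤ, n < m → m < N - 1 → δ (m - 1) + δ (m + 1) ≥ 2 * δ m)
    (m : ℤ) (hnm : n < m) (hmN : m < N - 1)
    (hpos : δ m > 0) (hstep : δ (m + 1) = δ m + 1) :
    (∀ i : ℤ, 0 ≤ i → i ≤ δ m → δ (m - i) = δ m - i) ∧ δ m ≤ m - n := by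
  -- every difference `δ k - δ (k - 1)` for `n < k ≤ m + 1` is at most 1
  have hB : ∀ k : ℤ, k ≤ m + 1 → n < k → δ k - δ (k - 1) ≤ 1 := by
    refine Int.le_induction_down (motive := fun k _ => n < k → δ k - δ (k - 1) ≤ 1) ?_ ?_
    · intro _
      rw [show m + 1 - 1 = m by ring]
      omega
    · intro l hl ih h
      have hnl : n < l := by omega
      have h1 := ih hnl
      have h2 := hmid (l - 1) h (by omega)
      rw [show l - 1 - 1 = l - 1 - 1 by ring, show l - 1 + 1 = l by ring] at h2
      omega
  -- lower bound going down from `m`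
  have hC : ∀ k : ℤ, k ≤ m → n ≤ k → δ k ≥ δ m - (m - k) := by
    refine Int.le_induction_down (motive := fun k _ => n ≤ k → δ k ≥ δ m - (m - k)) ?_ ?_
    · intro _; omega
    · intro l hl ih h
      have h1 := ih (by omega)
      have h2 := hB l (by omega) (by omega)
      omega
  -- second conclusion
  have hmn : δ m ≤ m - n := by
    have := hC n (by omega) le_rfl
    omega
  -- if a difference is ≤ 0 at `n < k ≤ m`, then `δ (k - 1) ≤ 0`
  have hD : ∀ k : ℤ, n + 1 ≤ k → k ≤ m → δ k - δ (k - 1) ≤ 0 → δ (k - 1) ≤ 0 := by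
    intro k hk
    refine Int.le_induction
      (motive := fun k _ => k ≤ m → δ k - δ (k - 1) ≤ 0 → δ (k - 1) ≤ 0) ?_ ?_ k hk
    · intro _ _
      rw [show n + 1 - 1 = n by ring]
      omega
    · intro l hl ih hlm hd
      rw [show l + 1 - 1 = l by ring] at hd ⊢
      have h1 := hmid l (by omega) (by omega)
      have h2 : δ l - δ (l - 1) ≤ 0 := by omega
      have h3 := ih (by omega) h2
      omega
  -- main claim, downward from `m`
  have hmain : ∀ k : ℤ, k ≤ m → m - δ m ≤ k → δ k = δ m - (m - k) := by
    refine Int.le_induction_down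
      (motive := fun k _ => m - δ m ≤ k → δ k = δ m - (m - k)) ?_ ?_
    · intro _; omega
    · intro l hl ih h
      have h1 := ih (by omega)
      have hnl : n + 1 ≤ l := by omega
      have h2 := hB l (by omega) (by omega)
      have h3 : δ l - δ (l - 1) ≥ 1 := by
        by_contra hcon
        push_neg at hcon
        have hd : δ l - δ (l - 1) ≤ 0 := by omega
        have := hD l hnl (by omega) hd
        omega
      omega
  refine ⟨fun i hi0 hi => ?_, hmn⟩
  have := hmain (m - i) (by omega) (by omega)
  omega
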